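/- For 2 ≤ k ≤ n−1, the number of forests of k−1 labeled plane trees on {1,…,n} with roots 1,…,k−1 in which vertex n is a descendant of vertex 1 equals (2n−k) times the number of such forests with k trees and roots 1,…,k in which n is a descendant of 1. -/

import Mathlib

/-- `p` is the parent function of a rooted forest on `Fin n` whose roots are
exactly the vertices `0, …, k-1` (representing labels `1, …, k`). -/
def IsRootedForest (n k : ℕ) (p : Fin n → Fin n) : Prop :=
  (∀ v, p v = v ↔ v.val < k) ∧ ∀ v, ∃ m, ((p^[m]) v).val < k

/-- `rk` records, for every non-root vertex, its position among its siblings: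
it maps the children of each vertex `x` bijectively onto `{0, …, (#children of x) - 1}`,
so that the children of every vertex are linearly ordered.  Roots (which are children
of nobody) are normalized to have rank `0`. -/
def IsPlaneOrder (n : ℕ) (p : Fin n → Fin n) (rk : Fin n → ℕ) : Prop :=
  (∀ x : Fin n, Set.BijOn rk {v | p v = x ∧ v ≠ x}
      (Set.Iio ({v : Fin n | p v = x ∧ v ≠ x}.ncard))) ∧
  ∀ v, p v = v → rk v = 0

namespace PlaneAux

open Set Function

variable {n : ℕ}

/-- children set -/
def Ch (p : Fin n → Fin n) (x : Fin n) : Set (Fin n) := {v | p v = x ∧ v ≠ x}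

section Basic
variable {k : ℕ} {p : Fin n → Fin n}

lemma root_iter (hr : ∀ v : Fin n, p v = v ↔ v.val < k) {v : Fin n} (h : v.val < k) :
    ∀ m, p^[m] v = v := by
  intro m; induction m with
  | zero => rfl
  | succ m ih => rw [Function.iterate_succ_apply', ih, (hr v).2 h]

lemma no_cycle (hr : ∀ v : Fin n, p v = v ↔ v.val < k)
    (hre : ∀ v : Fin n, ∃ m, ((p^[m]) v).val < k)
    {v : Fin n} (hv : ¬ v.val < k) {m : ℕ} (hm : 0 < m) : p^[m] v ≠ v := by
  intro hcyc
  obtain ⟨D, hD⟩ := hre v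
  have hrep : ∀ j, p^[m * j] v = v := by
    intro j; induction j with
    | zero => rfl
    | succ j ih =>
      have : m * (j+1) = m * j + m := by ring
      rw [this, Function.iterate_add_apply, hcyc, ih]
  have hMD : D ≤ m * (D + 1) := by nlinarith
  have h1 : p^[m * (D+1)] v = p^[m * (D+1) - D] (p^[D] v) := by
    rw [← Function.iterate_add_apply, Nat.sub_add_cancel hMD]
  rw [root_iter hr hD, hrep (D+1)] at h1
  rw [← h1] at hD
  exact hv hD

lemma root_unique (hr : ∀ v : Fin n, p v = v ↔ v.val < k)
    {v z₁ z₂ : Fin n} {a b : ℕ} (h₁ : p^[a] v = z₁) (hz₁ : z₁.val < k)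
    (h₂ : p^[b] v = z₂) (hz₂ : z₂.val < k) : z₁ = z₂ := by
  rcases le_total a b with h | h
  · have : p^[b] v = p^[b-a] (p^[a] v) := by
      rw [← Function.iterate_add_apply, Nat.sub_add_cancel h]
    rw [h₁, root_iter hr hz₁] at this
    rw [h₂] at this; exact this.symm
  · have : p^[a] v = p^[a-b] (p^[b] v) := by
      rw [← Function.iterate_add_apply, Nat.sub_add_cancel h]
    rw [h₂, root_iter hr hz₂] at this
    rw [h₁] at this; exact this

/-- if chains from `v` avoid the modification set, iterates agree -/
lemma chain_eq {p p' : Fin n → Fin n} {S : Set (Fin n)} (hS : ∀ y, y ∉ S → p' y = p y)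
    {v : Fin n} (hav : ∀ m, p^[m] v ∉ S) : ∀ m, p'^[m] v = p^[m] v := by
  intro m; induction m with
  | zero => rfl
  | succ m ih =>
    rw [Function.iterate_succ_apply', Function.iterate_succ_apply', ih,
      hS _ (hav m)]

lemma reach_transfer {k' : ℕ} {p p' : Fin n → Fin n} {S : Set (Fin n)}
    (hre : ∀ v : Fin n, ∃ m, ((p^[m]) v).val < k)
    (hS : ∀ y, y ∉ S → p' y = p y)
    (hroots : ∀ y : Fin n, y.val < k → y ∉ S → ∃ m, ((p'^[m]) y).val < k')
    (hSr : ∀ s ∈ S, ∃ m, ((p'^[m]) s).val < k') :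
    ∀ v : Fin n, ∃ m, ((p'^[m]) v).val < k' := by
  have key : ∀ D : ℕ, ∀ v : Fin n, Nat.find (hre v) = D → ∃ m, ((p'^[m]) v).val < k' := by
    intro D
    induction D using Nat.strong_induction_on with
    | _ D IH =>
      intro v hD
      by_cases hvS : v ∈ S
      · exact hSr v hvS
      by_cases hvr : v.val < k
      · exact hroots v hvr hvS
      · have h0 : 0 < Nat.find (hre v) := by
          rcases Nat.eq_zero_or_pos (Nat.find (hre v)) with h | h
          · exfalso
            have hs := Nat.find_spec (hre v)
            rw [h] at hs; simp only [Function.iterate_zero_apply] at hs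
            exact hvr hs
          · exact h
        have hspec : ((p^[Nat.find (hre v)]) v).val < k := Nat.find_spec (hre v)
        have hstep : (p^[Nat.find (hre v) - 1] (p v)).val < k := by
          have : p^[Nat.find (hre v)] v = p^[Nat.find (hre v) - 1] (p v) := by
            conv_lhs => rw [← Nat.sub_add_cancel h0]
            rw [Function.iterate_add_apply]; rfl
          rwa [this] at hspec
        have hlt : Nat.find (hre (p v)) < D := by
          have h1 : Nat.find (hre (p v)) ≤ Nat.find (hre v) - 1 :=
            Nat.find_le hstep
          omega
        obtain ⟨m, hm⟩ := IH _ hlt (p v) rfl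
        refine ⟨m + 1, ?_⟩
        rwa [Function.iterate_succ_apply, hS v hvS]
  exact fun v => key _ v rfl

end Basic

section BijOn

variable {α : Type*}

lemma bijOn_insert {f g : α → ℕ} {C : Set α} {x : α} {i m : ℕ}
    (hbij : Set.BijOn f C (Set.Iio m)) (hx : x ∉ C) (hi : i ≤ m)
    (hgx : g x = i) (hg : ∀ y ∈ C, g y = if i ≤ f y then f y + 1 else f y) :
    Set.BijOn g (insert x C) (Set.Iio (m + 1)) := by
  constructor
  · rintro y (rfl | hy)
    · simp [hgx]; omega
    · have := hbij.mapsTo hy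
      simp only [Set.mem_Iio] at this ⊢
      rw [hg y hy]; split <;> omega
  constructor
  · rintro y (rfl | hy) z (rfl | hz) hyz
    · rfl
    · exfalso; rw [hgx, hg z hz] at hyz
      have := hbij.mapsTo hz
      split at hyz <;> omega
    · exfalso; rw [hgx, hg y hy] at hyz
      have := hbij.mapsTo hy
      split at hyz <;> omega
    · rw [hg y hy, hg z hz] at hyz
      have hfy := hbij.mapsTo hy
      have hfz := hbij.mapsTo hz
      have : f y = f z := by split at hyz <;> split at hyz <;> omega
      exact hbij.injOn hy hz this
  · intro j hj
    simp only [Set.mem_Iio] at hj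
    rcases lt_trichotomy j i with h | rfl | h
    · obtain ⟨y, hy, hfy⟩ := hbij.surjOn (show j ∈ Set.Iio m by simp; omega)
      exact ⟨y, Set.mem_insert_of_mem _ hy, by rw [hg y hy, hfy]; split <;> omega⟩
    · exact ⟨x, Set.mem_insert _ _, hgx⟩
    · obtain ⟨y, hy, hfy⟩ := hbij.surjOn (show j - 1 ∈ Set.Iio m by simp; omega)
      exact ⟨y, Set.mem_insert_of_mem _ hy, by rw [hg y hy, hfy]; split <;> omega⟩

lemma bijOn_remove {f g : α → ℕ} {C : Set α} {x : α} {m : ℕ}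
    (hbij : Set.BijOn f C (Set.Iio m)) (hx : x ∈ C)
    (hg : ∀ y ∈ C \ {x}, g y = if f x < f y then f y - 1 else f y) :
    Set.BijOn g (C \ {x}) (Set.Iio (m - 1)) := by
  have hfx := hbij.mapsTo hx
  simp only [Set.mem_Iio] at hfx
  constructor
  · intro y hy
    have hfy := hbij.mapsTo hy.1
    simp only [Set.mem_Iio] at hfy ⊢
    have hne : f y ≠ f x := fun h => hy.2 (hbij.injOn hy.1 hx h)
    rw [hg y hy]; split <;> omega
  constructor
  · intro y hy z hz hyz
    rw [hg y hy, hg z hz] at hyz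
    have hfy := hbij.mapsTo hy.1
    have hfz := hbij.mapsTo hz.1
    have hny : f y ≠ f x := fun h => hy.2 (hbij.injOn hy.1 hx h)
    have hnz : f z ≠ f x := fun h => hz.2 (hbij.injOn hz.1 hx h)
    have : f y = f z := by split at hyz <;> split at hyz <;> omega
    exact hbij.injOn hy.1 hz.1 this
  · intro j hj
    simp only [Set.mem_Iio] at hj
    rcases lt_or_ge j (f x) with h | h
    · obtain ⟨y, hy, hfy⟩ := hbij.surjOn (show j ∈ Set.Iio m by simp; omega)
      have hyx : y ≠ x := fun e => by subst e; omega
      exact ⟨y, ⟨hy, hyx⟩, by rw [hg y ⟨hy, hyx⟩, hfy]; split <;> omega⟩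
    · obtain ⟨y, hy, hfy⟩ := hbij.surjOn (show j + 1 ∈ Set.Iio m by simp; omega)
      have hyx : y ≠ x := fun e => by subst e; omega
      exact ⟨y, ⟨hy, hyx⟩, by rw [hg y ⟨hy, hyx⟩, hfy]; split <;> omega⟩

lemma bijOn_swap {f g : α → ℕ} {C : Set α} {x z : α} {m : ℕ}
    (hbij : Set.BijOn f C (Set.Iio m)) (hx : x ∈ C) (hz : z ∉ C)
    (hgz : g z = f x) (hg : ∀ y ∈ C \ {x}, g y = f y) :
    Set.BijOn g (insert z (C \ {x})) (Set.Iio m) := by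
  constructor
  · rintro y (rfl | hy)
    · rw [hgz]; exact hbij.mapsTo hx
    · rw [hg y hy]; exact hbij.mapsTo hy.1
  constructor
  · rintro y (rfl | hy) w (rfl | hw) hyw
    · rfl
    · exfalso; rw [hgz, hg w hw] at hyw
      exact hw.2 (hbij.injOn hw.1 hx hyw.symm)
    · exfalso; rw [hgz, hg y hy] at hyw
      exact hy.2 (hbij.injOn hy.1 hx hyw)
    · rw [hg y hy, hg w hw] at hyw
      exact hbij.injOn hy.1 hw.1 hyw
  · intro j hj
    obtain ⟨y, hy, hfy⟩ := hbij.surjOn hj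
    by_cases hyx : y = x
    · exact ⟨z, Set.mem_insert _ _, by rw [hgz, ← hyx, hfy]⟩
    · exact ⟨y, Set.mem_insert_of_mem _ ⟨hy, hyx⟩, by rw [hg y ⟨hy, hyx⟩, hfy]⟩

end BijOn


/-- detach `R` from its parent, making it a root -/
def aP (p : Fin n → Fin n) (R : Fin n) : Fin n → Fin n := fun y => if y = R then R else p y
def aRk (p : Fin n → Fin n) (rk : Fin n → ℕ) (R : Fin n) : Fin n → ℕ :=
  fun y => if y = R then 0 else if p y = p R ∧ y ≠ p R ∧ rk R < rk y then rk y - 1 else rk y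

/-- attach root `R` as a child of `v` at position `i` -/
def aP' (p : Fin n → Fin n) (R v : Fin n) : Fin n → Fin n := fun y => if y = R then v else p y
def aRk' (p : Fin n → Fin n) (rk : Fin n → ℕ) (R v : Fin n) (i : ℕ) : Fin n → ℕ :=
  fun y => if y = R then i else if p y = v ∧ y ≠ v ∧ i ≤ rk y then rk y + 1 else rk y

/-- `N` takes `R`'s place as child of `p R`; `R` becomes a root -/
def bP (p : Fin n → Fin n) (N R : Fin n) : Fin n → Fin n :=
  fun y => if y = N then p R else if y = R then R else p y
def bRk (p : Fin n → Fin n) (rk : Fin n → ℕ) (N R : Fin n) : Fin n → ℕ :=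
  fun y => if y = N then rk R else if y = R then 0 else
    if p y = p N ∧ y ≠ p N ∧ rk N < rk y then rk y - 1 else rk y

/-- `N` moves to be child of `v` at position `i`; root `R` takes `N`'s old place -/
def bP' (p : Fin n → Fin n) (N R v : Fin n) : Fin n → Fin n :=
  fun y => if y = N then v else if y = R then p N else p y
def bRk' (p : Fin n → Fin n) (rk : Fin n → ℕ) (N R v : Fin n) (i : ℕ) : Fin n → ℕ :=
  fun y => if y = N then i else if y = R then rk N else
    if p y = v ∧ y ≠ v ∧ i ≤ rk y then rk y + 1 else rk y

section ChLemmas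

variable {p : Fin n → Fin n} {rk : Fin n → ℕ} {N R v : Fin n} {i : ℕ}

lemma ch_aP (hR : p R ≠ R) (x : Fin n) :
    Ch (aP p R) x = if x = p R then Ch p (p R) \ {R} else Ch p x := by
  ext y
  by_cases hx : x = p R <;> by_cases hy : y = R <;>
    simp_all [Ch, aP] <;> tauto

lemma ch_aP' (hRroot : p R = R) (hvR : v ≠ R) (x : Fin n) :
    Ch (aP' p R v) x = if x = v then insert R (Ch p v) else Ch p x := by
  ext y
  by_cases hx : x = v <;> by_cases hy : y = R <;>
    simp_all [Ch, aP'] <;> tauto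

lemma ch_bP (hNR : N ≠ R) (hNnr : p N ≠ N) (hRnr : p R ≠ R) (hvw : p N ≠ p R)
    (hwN : p R ≠ N) (x : Fin n) :
    Ch (bP p N R) x =
      if x = p N then Ch p (p N) \ {N}
      else if x = p R then insert N (Ch p (p R) \ {R})
      else Ch p x := by
  have hNR' : ¬ (N = R) := hNR
  ext y
  by_cases hx1 : x = p N <;> by_cases hx2 : x = p R <;>
    by_cases hy1 : y = N <;> by_cases hy2 : y = R <;>
    simp_all [Ch, bP] <;> tauto

lemma ch_bP' (hNR : N ≠ R) (hNnr : p N ≠ N) (hRroot : p R = R) (hvw : v ≠ p N)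
    (hvN : v ≠ N) (hwR : p N ≠ R) (x : Fin n) :
    Ch (bP' p N R v) x =
      if x = v then insert N (Ch p v)
      else if x = p N then insert R (Ch p (p N) \ {N})
      else Ch p x := by
  have hNR' : ¬ (N = R) := hNR
  ext y
  by_cases hx1 : x = v <;> by_cases hx2 : x = p N <;>
    by_cases hy1 : y = N <;> by_cases hy2 : y = R <;>
    simp_all [Ch, bP'] <;> tauto

end ChLemmas



section PO

variable {p : Fin n → Fin n} {rk : Fin n → ℕ} {N R v : Fin n} {i : ℕ}

lemma isPlaneOrder_iff {p : Fin n → Fin n} {rk : Fin n → ℕ} :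
    IsPlaneOrder n p rk ↔
      ((∀ x, Set.BijOn rk (Ch p x) (Set.Iio ((Ch p x).ncard))) ∧
        ∀ v, p v = v → rk v = 0) := Iff.rfl

lemma po_aP (hpo : IsPlaneOrder n p rk) (hR : p R ≠ R) :
    IsPlaneOrder n (aP p R) (aRk p rk R) := by
  have hmem : R ∈ Ch p (p R) := ⟨rfl, Ne.symm hR⟩
  rw [isPlaneOrder_iff]
  constructor
  · intro x
    rw [ch_aP hR x]
    by_cases hx : x = p R
    · rw [if_pos hx, Set.ncard_diff_singleton_of_mem hmem]
      refine bijOn_remove ((isPlaneOrder_iff.1 hpo).1 (p R)) hmem ?_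
      intro y hy
      have hyR : y ≠ R := by simpa using hy.2
      simp [aRk, hyR, hy.1.1, hy.1.2]
    · rw [if_neg hx]
      refine ((isPlaneOrder_iff.1 hpo).1 x).congr ?_
      intro y hy
      have hyR : y ≠ R := by rintro rfl; exact hx hy.1.symm
      have hcond : ¬ (p y = p R ∧ y ≠ p R ∧ rk R < rk y) := by
        rintro ⟨h1, -, -⟩; exact hx (hy.1.symm.trans h1)
      simp [aRk, hyR, hcond]
  · intro y hy
    by_cases hyR : y = R
    · simp [aRk, hyR]
    · have hpy : p y = y := by simpa [aP, hyR] using hy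
      have hcond : ¬ (p y = p R ∧ y ≠ p R ∧ rk R < rk y) := by
        rintro ⟨h1, h2, -⟩; rw [hpy] at h1; exact h2 h1
      simp [aRk, hyR, hcond, hpo.2 y hpy]

lemma po_aP' (hpo : IsPlaneOrder n p rk) (hRroot : p R = R) (hvR : v ≠ R)
    (hi : i ≤ (Ch p v).ncard) :
    IsPlaneOrder n (aP' p R v) (aRk' p rk R v i) := by
  have hnm : R ∉ Ch p v := by
    rintro ⟨h1, -⟩; rw [hRroot] at h1; exact hvR h1.symm
  rw [isPlaneOrder_iff]
  constructor
  · intro x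
    rw [ch_aP' hRroot hvR x]
    by_cases hx : x = v
    · rw [if_pos hx, Set.ncard_insert_of_notMem hnm]
      refine bijOn_insert ((isPlaneOrder_iff.1 hpo).1 v) hnm hi (by simp [aRk']) ?_
      intro y hy
      have hyR : y ≠ R := fun h => hnm (h ▸ hy)
      simp [aRk', hyR, hy.1, hy.2]
    · rw [if_neg hx]
      refine ((isPlaneOrder_iff.1 hpo).1 x).congr ?_
      intro y hy
      have hyR : y ≠ R := by
        rintro rfl; exact hy.2 (hRroot.symm.trans hy.1)
      have hcond : ¬ (p y = v ∧ y ≠ v ∧ i ≤ rk y) := by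
        rintro ⟨h1, -, -⟩; exact hx (hy.1.symm.trans h1)
      simp [aRk', hyR, hcond]
  · intro y hy
    by_cases hyR : y = R
    · exfalso
      have : v = R := by simpa [aP', hyR] using hy
      exact hvR this
    · have hpy : p y = y := by simpa [aP', hyR] using hy
      have hcond : ¬ (p y = v ∧ y ≠ v ∧ i ≤ rk y) := by
        rintro ⟨h1, h2, -⟩; rw [hpy] at h1; exact h2 h1
      simp only [aRk', if_neg hyR, if_neg hcond]
      exact hpo.2 y hpy

lemma po_bP (hpo : IsPlaneOrder n p rk) (hNR : N ≠ R) (hNnr : p N ≠ N)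
    (hRnr : p R ≠ R) (hvw : p N ≠ p R) (hwN : p R ≠ N) :
    IsPlaneOrder n (bP p N R) (bRk p rk N R) := by
  have hmemN : N ∈ Ch p (p N) := ⟨rfl, Ne.symm hNnr⟩
  have hmemR : R ∈ Ch p (p R) := ⟨rfl, Ne.symm hRnr⟩
  have hNnotw : N ∉ Ch p (p R) := by rintro ⟨h1, -⟩; exact hvw h1
  rw [isPlaneOrder_iff]
  constructor
  · intro x
    rw [ch_bP hNR hNnr hRnr hvw hwN x]
    by_cases hx1 : x = p N
    · rw [if_pos hx1, Set.ncard_diff_singleton_of_mem hmemN]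
      refine bijOn_remove ((isPlaneOrder_iff.1 hpo).1 (p N)) hmemN ?_
      intro y hy
      have hyN : y ≠ N := by simpa using hy.2
      have hyR : y ≠ R := by rintro rfl; exact hvw hy.1.1.symm
      simp [bRk, hyN, hyR, hy.1.1, hy.1.2]
    · by_cases hx2 : x = p R
      · rw [if_neg hx1, if_pos hx2]
        have hNnotw' : N ∉ Ch p (p R) \ {R} := fun h => hNnotw h.1
        have hpos : 0 < (Ch p (p R)).ncard :=
          (Set.ncard_pos (Set.toFinite _)).2 ⟨R, hmemR⟩
        have hcard : (insert N (Ch p (p R) \ {R})).ncard = (Ch p (p R)).ncard := by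
          rw [Set.ncard_insert_of_notMem hNnotw',
            Set.ncard_diff_singleton_of_mem hmemR]
          omega
        rw [hcard]
        refine bijOn_swap ((isPlaneOrder_iff.1 hpo).1 (p R)) hmemR hNnotw
          (by simp [bRk]) ?_
        intro y hy
        have hyR : y ≠ R := by simpa using hy.2
        have hyN : y ≠ N := fun h => hNnotw (h ▸ hy.1)
        have hcond : ¬ (p y = p N ∧ y ≠ p N ∧ rk N < rk y) := by
          rintro ⟨h1, -, -⟩; exact hvw (h1.symm.trans hy.1.1)
        simp [bRk, hyN, hyR, hcond]
      · rw [if_neg hx1, if_neg hx2]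
        refine ((isPlaneOrder_iff.1 hpo).1 x).congr ?_
        intro y hy
        have hyN : y ≠ N := by rintro rfl; exact hx1 hy.1.symm
        have hyR : y ≠ R := by rintro rfl; exact hx2 hy.1.symm
        have hcond : ¬ (p y = p N ∧ y ≠ p N ∧ rk N < rk y) := by
          rintro ⟨h1, -, -⟩; exact hx1 (hy.1.symm.trans h1)
        simp [bRk, hyN, hyR, hcond]
  · intro y hy
    by_cases hyN : y = N
    · exfalso
      have : p R = N := by simpa [bP, hyN] using hy
      exact hwN this
    · by_cases hyR : y = R
      · simp [bRk, hyR, hNR.symm]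
      · have hpy : p y = y := by simpa [bP, hyN, hyR] using hy
        have hcond : ¬ (p y = p N ∧ y ≠ p N ∧ rk N < rk y) := by
          rintro ⟨h1, h2, -⟩; rw [hpy] at h1; exact h2 h1
        simp only [bRk, if_neg hyN, if_neg hyR, if_neg hcond]
        exact hpo.2 y hpy

lemma po_bP' (hpo : IsPlaneOrder n p rk) (hNR : N ≠ R) (hNnr : p N ≠ N)
    (hRroot : p R = R) (hvw : v ≠ p N) (hvN : v ≠ N) (hwR : p N ≠ R)
    (hi : i ≤ (Ch p v).ncard) :
    IsPlaneOrder n (bP' p N R v) (bRk' p rk N R v i) := by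
  have hNnotv : N ∉ Ch p v := by rintro ⟨h1, -⟩; exact hvw h1.symm
  have hmemN : N ∈ Ch p (p N) := ⟨rfl, Ne.symm hNnr⟩
  have hRnot : ∀ x, R ∉ Ch p x := by
    rintro x ⟨h1, h2⟩; rw [hRroot] at h1; exact h2 h1
  rw [isPlaneOrder_iff]
  constructor
  · intro x
    rw [ch_bP' hNR hNnr hRroot hvw hvN hwR x]
    by_cases hx1 : x = v
    · rw [if_pos hx1, Set.ncard_insert_of_notMem hNnotv]
      refine bijOn_insert ((isPlaneOrder_iff.1 hpo).1 v) hNnotv hi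
        (by simp [bRk']) ?_
      intro y hy
      have hyN : y ≠ N := fun h => hNnotv (h ▸ hy)
      have hyR : y ≠ R := fun h => hRnot v (h ▸ hy)
      simp [bRk', hyN, hyR, hy.1, hy.2]
    · by_cases hx2 : x = p N
      · rw [if_neg hx1, if_pos hx2]
        have hRnot' : R ∉ Ch p (p N) \ {N} := fun h => hRnot _ h.1
        have hpos : 0 < (Ch p (p N)).ncard :=
          (Set.ncard_pos (Set.toFinite _)).2 ⟨N, hmemN⟩
        have hcard : (insert R (Ch p (p N) \ {N})).ncard = (Ch p (p N)).ncard := by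
          rw [Set.ncard_insert_of_notMem hRnot',
            Set.ncard_diff_singleton_of_mem hmemN]
          omega
        rw [hcard]
        refine bijOn_swap ((isPlaneOrder_iff.1 hpo).1 (p N)) hmemN (hRnot _)
          (by simp [bRk', hNR.symm]) ?_
        intro y hy
        have hyN : y ≠ N := by simpa using hy.2
        have hyR : y ≠ R := fun h => hRnot _ (h ▸ hy.1)
        have hcond : ¬ (p y = v ∧ y ≠ v ∧ i ≤ rk y) := by
          rintro ⟨h1, -, -⟩; exact hvw (h1.symm.trans hy.1.1)
        simp [bRk', hyN, hyR, hcond]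
      · rw [if_neg hx1, if_neg hx2]
        refine ((isPlaneOrder_iff.1 hpo).1 x).congr ?_
        intro y hy
        have hyN : y ≠ N := by rintro rfl; exact hx2 hy.1.symm
        have hyR : y ≠ R := fun h => hRnot x (h ▸ hy)
        have hcond : ¬ (p y = v ∧ y ≠ v ∧ i ≤ rk y) := by
          rintro ⟨h1, -, -⟩; exact hx1 (hy.1.symm.trans h1)
        simp [bRk', hyN, hyR, hcond]
  · intro y hy
    by_cases hyN : y = N
    · exfalso
      have : v = N := by simpa [bP', hyN] using hy
      exact hvN this
    · by_cases hyR : y = R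
      · exfalso
        have : p N = R := by simpa [bP', hyR, Ne.symm hNR] using hy
        exact hwR this
      · have hpy : p y = y := by simpa [bP', hyN, hyR] using hy
        have hcond : ¬ (p y = v ∧ y ≠ v ∧ i ≤ rk y) := by
          rintro ⟨h1, h2, -⟩; rw [hpy] at h1; exact h2 h1
        simp only [bRk', if_neg hyN, if_neg hyR, if_neg hcond]
        exact hpo.2 y hpy

end PO


lemma chain_eq_upto {p p' : Fin n → Fin n} {S : Set (Fin n)} (hS : ∀ y, y ∉ S → p' y = p y)
    {v : Fin n} {j : ℕ} (hav : ∀ m, m < j → p^[m] v ∉ S) : ∀ m, m ≤ j → p'^[m] v = p^[m] v := by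
  intro m hm
  induction m with
  | zero => rfl
  | succ m ih =>
    rw [Function.iterate_succ_apply', Function.iterate_succ_apply',
      ih (le_trans (Nat.le_succ m) hm), hS _ (hav m (lt_of_lt_of_le (Nat.lt_succ_self m) hm))]

section Main

variable {K : ℕ} {N Z R : Fin n}

/-- forests with roots `0,…,K-1` in which `N` is a weak descendant of `Z` -/
def Src (n K : ℕ) (N Z : Fin n) :=
  {pr : (Fin n → Fin n) × (Fin n → ℕ) //
    IsRootedForest n K pr.1 ∧ IsPlaneOrder n pr.1 pr.2 ∧ ∃ m, pr.1^[m] N = Z}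

section Fwd

variable {p : Fin n → Fin n} {rk : Fin n → ℕ}

-- basic nonroot facts in the source forest
lemma src_Rnr (hRK : R.val = K) (hr : ∀ v : Fin n, p v = v ↔ v.val < K) : p R ≠ R :=
  fun h => by have := (hr R).1 h; omega

lemma src_Nnr (hNK : K + 1 ≤ N.val) (hr : ∀ v : Fin n, p v = v ↔ v.val < K) : p N ≠ N :=
  fun h => by have := (hr N).1 h; omega

lemma src_NR (hRK : R.val = K) (hNK : K + 1 ≤ N.val) : N ≠ R := fun h => by rw [h] at hNK; omega

lemma src_ZR (hRK : R.val = K) (hZK : Z.val < K) : Z ≠ R := fun h => by rw [h] at hZK; omega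

lemma src_NZ (hZK : Z.val < K) (hNK : K + 1 ≤ N.val) : N ≠ Z := fun h => by rw [h] at hNK; omega

/-- Case A forward: goodness of the detachment -/
lemma good_aFwd (hRK : R.val = K) (hF : IsRootedForest n K p ∧ IsPlaneOrder n p rk ∧ ∃ m, p^[m] N = Z)
    (hA : ¬ ∃ m, p^[m] N = R) :
    IsRootedForest n (K+1) (aP p R) ∧ IsPlaneOrder n (aP p R) (aRk p rk R) ∧
      ∃ m, (aP p R)^[m] N = Z := by
  obtain ⟨⟨hr, hre⟩, hpo, hNZc⟩ := hF
  have hRnr : p R ≠ R := src_Rnr hRK hr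
  have hS : ∀ y : Fin n, y ∉ ({R} : Set (Fin n)) → aP p R y = p y := by
    intro y hy; simp only [Set.mem_singleton_iff] at hy; simp [aP, hy]
  refine ⟨⟨?_, ?_⟩, po_aP hpo hRnr, ?_⟩
  · intro y
    by_cases hy : y = R
    · subst hy; simp [aP, hRK]
    · have hvy : y.val ≠ K := fun h => hy (Fin.ext (by rw [h, hRK]))
      simp only [aP, if_neg hy]
      rw [hr y]
      omega
  · refine reach_transfer hre hS ?_ ?_
    · intro y hy _; exact ⟨0, by simpa using (by omega : y.val < K + 1)⟩
    · intro s hs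
      simp only [Set.mem_singleton_iff] at hs
      refine ⟨0, ?_⟩
      simp only [Function.iterate_zero_apply, hs, hRK]
      omega
  · obtain ⟨m, hm⟩ := hNZc
    refine ⟨m, ?_⟩
    rw [chain_eq hS (fun m' => ?_) m]; · exact hm
    simp only [Set.mem_singleton_iff]
    exact fun h => hA ⟨m', h⟩

lemma corner_aFwd (hRK : R.val = K) (hF : IsRootedForest n K p ∧ IsPlaneOrder n p rk ∧ ∃ m, p^[m] N = Z) :
    rk R < (Ch (aP p R) (p R)).ncard + 1 := by
  obtain ⟨⟨hr, hre⟩, hpo, -⟩ := hF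
  have hRnr : p R ≠ R := src_Rnr hRK hr
  have hmem : R ∈ Ch p (p R) := ⟨rfl, Ne.symm hRnr⟩
  have h1 : rk R < (Ch p (p R)).ncard := (isPlaneOrder_iff.1 hpo).1 (p R) |>.mapsTo hmem
  have h2 : Ch (aP p R) (p R) = Ch p (p R) \ {R} := by rw [ch_aP hRnr, if_pos rfl]
  have h3 : 0 < (Ch p (p R)).ncard := (Set.ncard_pos (Set.toFinite _)).2 ⟨R, hmem⟩
  rw [h2, Set.ncard_diff_singleton_of_mem hmem]
  omega

/-- facts for case B forward -/
lemma bFwd_facts (hRK : R.val = K) (hNK : K + 1 ≤ N.val) (hr : ∀ v : Fin n, p v = v ↔ v.val < K)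
    (hre : ∀ v : Fin n, ∃ m, ((p^[m]) v).val < K)
    (hB : ∃ m, p^[m] N = R) :
    (∀ m, p^[m] (p R) ≠ R) ∧ (∀ m, p^[m] (p R) ≠ N) ∧ p N ≠ p R ∧ p R ≠ N := by
  have hRnr : p R ≠ R := src_Rnr hRK hr
  have hNnr : p N ≠ N := src_Nnr hNK hr
  have hRv : ¬ R.val < K := by omega
  have hNv : ¬ N.val < K := by omega
  have f1 : ∀ m, p^[m] (p R) ≠ R := by
    intro m h
    have : p^[m+1] R = R := by rw [Function.iterate_succ_apply]; exact h
    exact no_cycle hr hre hRv (Nat.succ_pos m) this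
  have f2 : ∀ m, p^[m] (p R) ≠ N := by
    intro m h
    obtain ⟨a, ha⟩ := hB
    have h1 : p^[m+1] R = N := by rw [Function.iterate_succ_apply]; exact h
    have h2 : p^[a + (m+1)] R = R := by
      rw [Function.iterate_add_apply, h1, ha]
    exact no_cycle hr hre hRv (by omega) h2
  refine ⟨f1, f2, ?_, fun h => f2 0 h⟩
  · intro h
    obtain ⟨a, ha⟩ := hB
    have ha0 : a ≠ 0 := by
      rintro rfl; exact src_NR hRK hNK ha
    have : p^[a-1] (p N) = R := by
      have : p^[(a-1)+1] N = R := by rwa [Nat.sub_add_cancel (Nat.one_le_iff_ne_zero.2 ha0)]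
      rwa [Function.iterate_succ_apply] at this
    rw [h] at this
    exact f1 _ this

lemma good_bFwd (hRK : R.val = K) (hZK : Z.val < K) (hNK : K + 1 ≤ N.val) (hF : IsRootedForest n K p ∧ IsPlaneOrder n p rk ∧ ∃ m, p^[m] N = Z)
    (hB : ∃ m, p^[m] N = R) :
    IsRootedForest n (K+1) (bP p N R) ∧ IsPlaneOrder n (bP p N R) (bRk p rk N R) ∧
      ∃ m, (bP p N R)^[m] N = Z := by
  obtain ⟨⟨hr, hre⟩, hpo, hNZc⟩ := hF
  obtain ⟨f1, f2, hvw, hwN⟩ := bFwd_facts hRK hNK hr hre hB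
  have hRnr : p R ≠ R := src_Rnr hRK hr
  have hNnr : p N ≠ N := src_Nnr hNK hr
  have hNR : N ≠ R := src_NR hRK hNK
  have hS : ∀ y : Fin n, y ∉ ({N, R} : Set (Fin n)) → bP p N R y = p y := by
    intro y hy
    simp only [Set.mem_insert_iff, Set.mem_singleton_iff, not_or] at hy
    simp [bP, hy.1, hy.2]
  have hwchain : ∀ m, (bP p N R)^[m] (p R) = p^[m] (p R) := by
    refine chain_eq hS ?_
    intro m
    simp only [Set.mem_insert_iff, Set.mem_singleton_iff, not_or]
    exact ⟨f2 m, f1 m⟩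
  refine ⟨⟨?_, ?_⟩, po_bP hpo hNR hNnr hRnr hvw hwN, ?_⟩
  · intro y
    by_cases hyN : y = N
    · subst hyN
      simp only [bP, if_pos rfl]
      constructor
      · intro h; exact absurd h hwN
      · intro h; omega
    · by_cases hyR : y = R
      · subst hyR; simp [bP, if_neg hNR.symm, hRK]
      · have hvy : y.val ≠ K := fun h => hyR (Fin.ext (by rw [h, hRK]))
        simp only [bP, if_neg hyN, if_neg hyR]
        rw [hr y]
        omega
  · refine reach_transfer hre hS ?_ ?_
    · intro y hy _; exact ⟨0, by simpa using (by omega : y.val < K + 1)⟩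
    · intro s hs
      simp only [Set.mem_insert_iff, Set.mem_singleton_iff] at hs
      rcases hs with hs | hs
      · obtain ⟨mw, hmw⟩ := hre (p R)
        refine ⟨mw + 1, ?_⟩
        rw [hs, Function.iterate_succ_apply]
        have hbn : bP p N R N = p R := by simp [bP]
        rw [hbn, hwchain mw]
        omega
      · refine ⟨0, ?_⟩
        simp only [Function.iterate_zero_apply, hs, hRK]
        omega
  · obtain ⟨m₀, hm₀⟩ := hNZc
    obtain ⟨a, ha⟩ := hB
    have hm₀a : a ≤ m₀ := by
      by_contra h
      push_neg at h
      have : p^[a] N = p^[a - m₀] (p^[m₀] N) := by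
        rw [← Function.iterate_add_apply, Nat.sub_add_cancel (le_of_lt h)]
      rw [hm₀, root_iter hr hZK, ha] at this
      exact src_ZR hRK hZK this.symm
    have hRZ : p^[m₀ - a] R = Z := by
      have : p^[m₀] N = p^[m₀ - a] (p^[a] N) := by
        rw [← Function.iterate_add_apply, Nat.sub_add_cancel hm₀a]
      rw [hm₀, ha] at this
      exact this.symm
    have hma : m₀ - a ≠ 0 := by
      rintro h
      rw [h] at hRZ
      exact src_ZR hRK hZK hRZ.symm
    have hwZ : p^[m₀ - a - 1] (p R) = Z := by
      have : p^[(m₀ - a - 1) + 1] R = Z := by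
        rwa [Nat.sub_add_cancel (Nat.one_le_iff_ne_zero.2 hma)]
      rwa [Function.iterate_succ_apply] at this
    refine ⟨(m₀ - a - 1) + 1, ?_⟩
    rw [Function.iterate_succ_apply]
    have : bP p N R N = p R := by simp [bP]
    rw [this, hwchain, hwZ]

lemma corner_bFwd (hRK : R.val = K) (hNK : K + 1 ≤ N.val) (hF : IsRootedForest n K p ∧ IsPlaneOrder n p rk ∧ ∃ m, p^[m] N = Z)
    (hB : ∃ m, p^[m] N = R) :
    rk N < (Ch (bP p N R) (p N)).ncard + 1 := by
  obtain ⟨⟨hr, hre⟩, hpo, -⟩ := hF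
  obtain ⟨f1, f2, hvw, hwN⟩ := bFwd_facts hRK hNK hr hre hB
  have hRnr : p R ≠ R := src_Rnr hRK hr
  have hNnr : p N ≠ N := src_Nnr hNK hr
  have hNR : N ≠ R := src_NR hRK hNK
  have hmem : N ∈ Ch p (p N) := ⟨rfl, Ne.symm hNnr⟩
  have h1 : rk N < (Ch p (p N)).ncard := (isPlaneOrder_iff.1 hpo).1 (p N) |>.mapsTo hmem
  have h2 : Ch (bP p N R) (p N) = Ch p (p N) \ {N} := by
    rw [ch_bP hNR hNnr hRnr hvw hwN, if_pos rfl]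
  have h3 : 0 < (Ch p (p N)).ncard := (Set.ncard_pos (Set.toFinite _)).2 ⟨N, hmem⟩
  rw [h2, Set.ncard_diff_singleton_of_mem hmem]
  omega

end Fwd

section Inv

variable {p : Fin n → Fin n} {rk : Fin n → ℕ}

lemma inv_Rroot (hRK : R.val = K) (hr : ∀ y : Fin n, p y = y ↔ y.val < K+1) : p R = R :=
  (hr R).2 (by omega)

lemma inv_Navoid (hRK : R.val = K) (hZK : Z.val < K)
    (hr : ∀ y : Fin n, p y = y ↔ y.val < K+1) (hNZc : ∃ m, p^[m] N = Z) :
    ∀ m, p^[m] N ≠ R := by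
  intro m h
  obtain ⟨m₀, hm₀⟩ := hNZc
  have : R = Z := root_unique hr h (by omega) hm₀ (by omega)
  exact src_ZR hRK hZK this.symm

lemma good_aInv (hRK : R.val = K) (hZK : Z.val < K) {v : Fin n} {i : ℕ}
    (hG : IsRootedForest n (K+1) p ∧ IsPlaneOrder n p rk ∧ ∃ m, p^[m] N = Z)
    (hi : i ≤ (Ch p v).ncard)
    (hA : ¬ ∃ m, p^[m] v = R) :
    IsRootedForest n K (aP' p R v) ∧ IsPlaneOrder n (aP' p R v) (aRk' p rk R v i) ∧
      ∃ m, (aP' p R v)^[m] N = Z := by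
  obtain ⟨⟨hr, hre⟩, hpo, hNZc⟩ := hG
  have hRroot : p R = R := inv_Rroot hRK hr
  have hvR : v ≠ R := fun h => hA ⟨0, by simpa using h⟩
  have hvavoid : ∀ m, p^[m] v ≠ R := fun m h => hA ⟨m, h⟩
  have hNavoid : ∀ m, p^[m] N ≠ R := inv_Navoid hRK hZK hr hNZc
  have hS : ∀ y : Fin n, y ∉ ({R} : Set (Fin n)) → aP' p R v y = p y := by
    intro y hy; simp only [Set.mem_singleton_iff] at hy; simp [aP', hy]
  refine ⟨⟨?_, ?_⟩, po_aP' hpo hRroot hvR hi, ?_⟩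
  · intro y
    by_cases hy : y = R
    · simp only [aP', if_pos hy]
      rw [hy]
      constructor
      · intro h; exact absurd h hvR
      · intro h; omega
    · have hvy : y.val ≠ K := fun h => hy (Fin.ext (by rw [h, hRK]))
      simp only [aP', if_neg hy]
      rw [hr y]
      omega
  · refine reach_transfer hre hS ?_ ?_
    · intro y hy hyR
      simp only [Set.mem_singleton_iff] at hyR
      have hvy : y.val ≠ K := fun h => hyR (Fin.ext (by rw [h, hRK]))
      exact ⟨0, by simpa using (by omega : y.val < K)⟩
    · intro s hs
      simp only [Set.mem_singleton_iff] at hs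
      obtain ⟨mv, hmv⟩ := hre v
      have hchain : ∀ m, (aP' p R v)^[m] v = p^[m] v := by
        refine chain_eq hS ?_
        intro m; simp only [Set.mem_singleton_iff]; exact hvavoid m
      refine ⟨mv + 1, ?_⟩
      rw [hs, Function.iterate_succ_apply]
      have h1 : aP' p R v R = v := by simp [aP']
      rw [h1, hchain mv]
      have : (p^[mv] v) ≠ R := hvavoid mv
      have : (p^[mv] v).val ≠ K := fun h => this (Fin.ext (by rw [h, hRK]))
      omega
  · obtain ⟨m₀, hm₀⟩ := hNZc
    refine ⟨m₀, ?_⟩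
    rw [chain_eq hS (fun m' => ?_) m₀]; · exact hm₀
    simp only [Set.mem_singleton_iff]
    exact hNavoid m'

lemma bInv_facts {v : Fin n} (hRK : R.val = K) (hZK : Z.val < K) (hNK : K + 1 ≤ N.val)
    (hr : ∀ y : Fin n, p y = y ↔ y.val < K+1)
    (hre : ∀ y : Fin n, ∃ m, ((p^[m]) y).val < K+1)
    (hNZc : ∃ m, p^[m] N = Z) (hB : ∃ m, p^[m] v = R) :
    p R = R ∧ p N ≠ N ∧ (∀ m, p^[m] N ≠ R) ∧ v ≠ N ∧ v ≠ p N ∧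
      (∃ a, (bP' p N R v)^[a] N = R) ∧ (∃ b, (bP' p N R v)^[b] R = Z) := by
  have hNR : N ≠ R := src_NR hRK (by omega)
  have hRroot : p R = R := inv_Rroot hRK hr
  have hNnr : p N ≠ N := fun h => by have := (hr N).1 h; omega
  have hNavoid : ∀ m, p^[m] N ≠ R := inv_Navoid hRK hZK hr hNZc
  have hwR : p N ≠ R := by have := hNavoid 1; simpa using this
  have hvN : v ≠ N := by
    rintro rfl
    obtain ⟨j, hj⟩ := hB
    exact hNavoid j hj
  have hvw : v ≠ p N := by
    intro h
    obtain ⟨j, hj⟩ := hB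
    rw [h] at hj
    exact hNavoid (j+1) (by rwa [Function.iterate_succ_apply])
  have hvavoidN : ∀ m, p^[m] v ≠ N := by
    intro a h
    obtain ⟨j, hj⟩ := hB
    rcases le_or_gt a j with hle | hlt
    · have : p^[j] v = p^[j - a] (p^[a] v) := by
        rw [← Function.iterate_add_apply, Nat.sub_add_cancel hle]
      rw [hj, h] at this
      exact hNavoid (j - a) this.symm
    · have : p^[a] v = p^[a - j] (p^[j] v) := by
        rw [← Function.iterate_add_apply, Nat.sub_add_cancel (le_of_lt hlt)]
      rw [h, hj, root_iter hr (by omega)] at this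
      exact hNR this
  have hS : ∀ y : Fin n, y ∉ ({N, R} : Set (Fin n)) → bP' p N R v y = p y := by
    intro y hy
    simp only [Set.mem_insert_iff, Set.mem_singleton_iff, not_or] at hy
    simp [bP', hy.1, hy.2]
  -- prefix chain from v
  have hdec : DecidablePred (fun m => p^[m] v = R) := fun m => instDecidableEqFin n _ _
  obtain ⟨j, hj, hjmin⟩ : ∃ j, p^[j] v = R ∧ ∀ m, m < j → p^[m] v ≠ R := by
    classical
    exact ⟨Nat.find hB, Nat.find_spec hB, fun m hm => Nat.find_min hB hm⟩
  have hvpre : (bP' p N R v)^[j] v = p^[j] v := by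
    refine chain_eq_upto hS (fun m hm => ?_) j le_rfl
    simp only [Set.mem_insert_iff, Set.mem_singleton_iff, not_or]
    exact ⟨hvavoidN m, hjmin m hm⟩
  have hc1 : bP' p N R v N = v := by simp [bP']
  have hc2 : (bP' p N R v)^[j + 1] N = R := by
    rw [Function.iterate_succ_apply, hc1, hvpre, hj]
  have hc3 : bP' p N R v R = p N := by simp [bP', hNR.symm]
  obtain ⟨m₀, hm₀⟩ := hNZc
  have hm₀0 : m₀ ≠ 0 := by
    rintro rfl
    exact src_NZ hZK hNK (by simpa using hm₀)
  have hwZ : p^[m₀ - 1] (p N) = Z := by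
    have : p^[(m₀ - 1) + 1] N = Z := by
      rwa [Nat.sub_add_cancel (Nat.one_le_iff_ne_zero.2 hm₀0)]
    rwa [Function.iterate_succ_apply] at this
  have hwchain : ∀ m, (bP' p N R v)^[m] (p N) = p^[m] (p N) := by
    refine chain_eq hS ?_
    intro m
    simp only [Set.mem_insert_iff, Set.mem_singleton_iff, not_or]
    constructor
    · intro h
      exact no_cycle hr hre (v := N) (by omega) (Nat.succ_pos m)
        (by rwa [Function.iterate_succ_apply])
    · intro h
      exact hNavoid (m+1) (by rwa [Function.iterate_succ_apply])
  have hc4 : (bP' p N R v)^[(m₀ - 1) + 1] R = Z := by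
    rw [Function.iterate_succ_apply, hc3, hwchain, hwZ]
  exact ⟨hRroot, hNnr, hNavoid, hvN, hvw, ⟨j + 1, hc2⟩, ⟨(m₀ - 1) + 1, hc4⟩⟩

lemma good_bInv (hRK : R.val = K) (hZK : Z.val < K) (hNK : K + 1 ≤ N.val) {v : Fin n} {i : ℕ}
    (hG : IsRootedForest n (K+1) p ∧ IsPlaneOrder n p rk ∧ ∃ m, p^[m] N = Z)
    (hi : i ≤ (Ch p v).ncard)
    (hB : ∃ m, p^[m] v = R) :
    IsRootedForest n K (bP' p N R v) ∧ IsPlaneOrder n (bP' p N R v) (bRk' p rk N R v i) ∧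
      ∃ m, (bP' p N R v)^[m] N = Z := by
  obtain ⟨⟨hr, hre⟩, hpo, hNZc⟩ := hG
  obtain ⟨hRroot, hNnr, hNavoid, hvN, hvw, ⟨a, ha⟩, ⟨b, hb⟩⟩ :=
    bInv_facts hRK hZK hNK hr hre hNZc hB
  have hNR : N ≠ R := src_NR hRK (by omega)
  have hwR : p N ≠ R := by have := hNavoid 1; simpa using this
  have hdesc : (bP' p N R v)^[b + a] N = Z := by
    rw [Function.iterate_add_apply, ha, hb]
  refine ⟨⟨?_, ?_⟩, po_bP' hpo hNR hNnr hRroot hvw hvN hwR hi, ⟨b + a, hdesc⟩⟩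
  · intro y
    by_cases hyN : y = N
    · simp only [bP', if_pos hyN]
      rw [hyN]
      constructor
      · intro h; exact absurd h hvN
      · intro h; omega
    · by_cases hyR : y = R
      · simp only [bP', if_neg hyN, if_pos hyR]
        rw [hyR]
        constructor
        · intro h; exact absurd h hwR
        · intro h; omega
      · have hvy : y.val ≠ K := fun h => hyR (Fin.ext (by rw [h, hRK]))
        simp only [bP', if_neg hyN, if_neg hyR]
        rw [hr y]
        omega
  · have hS : ∀ y : Fin n, y ∉ ({N, R} : Set (Fin n)) → bP' p N R v y = p y := by
      intro y hy
      simp only [Set.mem_insert_iff, Set.mem_singleton_iff, not_or] at hy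
      simp [bP', hy.1, hy.2]
    refine reach_transfer hre hS ?_ ?_
    · intro y hy hyNR
      simp only [Set.mem_insert_iff, Set.mem_singleton_iff, not_or] at hyNR
      have hvy : y.val ≠ K := fun h => hyNR.2 (Fin.ext (by rw [h, hRK]))
      exact ⟨0, by simpa using (by omega : y.val < K)⟩
    · intro s hs
      simp only [Set.mem_insert_iff, Set.mem_singleton_iff] at hs
      rcases hs with hs | hs
      · refine ⟨b + a, ?_⟩
        rw [hs, hdesc]
        exact hZK
      · refine ⟨b, ?_⟩
        rw [hs, hb]
        exact hZK

end Inv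

open scoped Classical

noncomputable def phi (hRK : R.val = K) (hZK : Z.val < K) (hNK : K + 1 ≤ N.val)
    (F : Src n K N Z) :
    Σ G : Src n (K+1) N Z, ((v : Fin n) × Fin ((Ch G.1.1 v).ncard + 1)) :=
  if hB : ∃ m, F.1.1^[m] N = R then
    ⟨⟨(bP F.1.1 N R, bRk F.1.1 F.1.2 N R), good_bFwd hRK hZK hNK F.2 hB⟩,
      ⟨F.1.1 N, ⟨F.1.2 N, corner_bFwd hRK hNK F.2 hB⟩⟩⟩
  else
    ⟨⟨(aP F.1.1 R, aRk F.1.1 F.1.2 R), good_aFwd hRK F.2 hB⟩,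
      ⟨F.1.1 R, ⟨F.1.2 R, corner_aFwd hRK F.2⟩⟩⟩

noncomputable def psi (hRK : R.val = K) (hZK : Z.val < K) (hNK : K + 1 ≤ N.val)
    (X : Σ G : Src n (K+1) N Z, ((v : Fin n) × Fin ((Ch G.1.1 v).ncard + 1))) :
    Src n K N Z :=
  if hB : ∃ m, X.1.1.1^[m] X.2.1 = R then
    ⟨(bP' X.1.1.1 N R X.2.1, bRk' X.1.1.1 X.1.1.2 N R X.2.1 (X.2.2 : ℕ)),
      good_bInv hRK hZK hNK X.1.2 (Nat.lt_succ_iff.mp X.2.2.isLt) hB⟩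
  else
    ⟨(aP' X.1.1.1 R X.2.1, aRk' X.1.1.1 X.1.1.2 R X.2.1 (X.2.2 : ℕ)),
      good_aInv hRK hZK X.1.2 (Nat.lt_succ_iff.mp X.2.2.isLt) hB⟩

lemma phi_pos (hRK : R.val = K) (hZK : Z.val < K) (hNK : K + 1 ≤ N.val)
    (F : Src n K N Z) (hB : ∃ m, F.1.1^[m] N = R) :
    phi hRK hZK hNK F =
      ⟨⟨(bP F.1.1 N R, bRk F.1.1 F.1.2 N R), good_bFwd hRK hZK hNK F.2 hB⟩,
        ⟨F.1.1 N, ⟨F.1.2 N, corner_bFwd hRK hNK F.2 hB⟩⟩⟩ := dif_pos hB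

lemma phi_neg (hRK : R.val = K) (hZK : Z.val < K) (hNK : K + 1 ≤ N.val)
    (F : Src n K N Z) (hB : ¬ ∃ m, F.1.1^[m] N = R) :
    phi hRK hZK hNK F =
      ⟨⟨(aP F.1.1 R, aRk F.1.1 F.1.2 R), good_aFwd hRK F.2 hB⟩,
        ⟨F.1.1 R, ⟨F.1.2 R, corner_aFwd hRK F.2⟩⟩⟩ := dif_neg hB

lemma psi_pos (hRK : R.val = K) (hZK : Z.val < K) (hNK : K + 1 ≤ N.val)
    (X : Σ G : Src n (K+1) N Z, ((v : Fin n) × Fin ((Ch G.1.1 v).ncard + 1)))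
    (hB : ∃ m, X.1.1.1^[m] X.2.1 = R) :
    psi hRK hZK hNK X =
      ⟨(bP' X.1.1.1 N R X.2.1, bRk' X.1.1.1 X.1.1.2 N R X.2.1 (X.2.2 : ℕ)),
        good_bInv hRK hZK hNK X.1.2 (Nat.lt_succ_iff.mp X.2.2.isLt) hB⟩ := dif_pos hB

lemma psi_neg (hRK : R.val = K) (hZK : Z.val < K) (hNK : K + 1 ≤ N.val)
    (X : Σ G : Src n (K+1) N Z, ((v : Fin n) × Fin ((Ch G.1.1 v).ncard + 1)))
    (hB : ¬ ∃ m, X.1.1.1^[m] X.2.1 = R) :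
    psi hRK hZK hNK X =
      ⟨(aP' X.1.1.1 R X.2.1, aRk' X.1.1.1 X.1.1.2 R X.2.1 (X.2.2 : ℕ)),
        good_aInv hRK hZK X.1.2 (Nat.lt_succ_iff.mp X.2.2.isLt) hB⟩ := dif_neg hB

lemma sigEq {K : ℕ} {N Z : Fin n} (G G' : Src n (K+1) N Z)
    (c : (v : Fin n) × Fin ((Ch G.1.1 v).ncard + 1))
    (c' : (v : Fin n) × Fin ((Ch G'.1.1 v).ncard + 1))
    (hG : G = G') (hv : c.1 = c'.1) (hi : (c.2 : ℕ) = (c'.2 : ℕ)) :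
    (⟨G, c⟩ : Σ H : Src n (K+1) N Z, ((v : Fin n) × Fin ((Ch H.1.1 v).ncard + 1))) =
      ⟨G', c'⟩ := by
  subst hG
  obtain ⟨v, i⟩ := c
  obtain ⟨v', i'⟩ := c'
  dsimp at hv hi
  subst hv
  have : i = i' := Fin.ext hi
  rw [this]

lemma psi_phi (hRK : R.val = K) (hZK : Z.val < K) (hNK : K + 1 ≤ N.val)
    (F : Src n K N Z) : psi hRK hZK hNK (phi hRK hZK hNK F) = F := by
  obtain ⟨⟨p, rk⟩, hF⟩ := F
  have hr := hF.1.1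
  have hre := hF.1.2
  have hpo := hF.2.1
  have hRnr : p R ≠ R := src_Rnr hRK hr
  have hNnr : p N ≠ N := src_Nnr hNK hr
  have hNR : N ≠ R := src_NR hRK hNK
  by_cases hB : ∃ m, p^[m] N = R
  · -- case B
    simp only [phi, dif_pos hB]
    have hcond : ∃ m, (bP p N R)^[m] (p N) = R := by
      classical
      obtain ⟨a, ha, hamin⟩ : ∃ a, p^[a] N = R ∧ ∀ m, m < a → p^[m] N ≠ R :=
        ⟨Nat.find hB, Nat.find_spec hB, fun m hm => Nat.find_min hB hm⟩
      have ha0 : a ≠ 0 := by rintro rfl; exact hNR (by simpa using ha)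
      have hstep : p^[a - 1] (p N) = R := by
        have : p^[(a-1)+1] N = R := by
          rwa [Nat.sub_add_cancel (Nat.one_le_iff_ne_zero.2 ha0)]
        rwa [Function.iterate_succ_apply] at this
      have hS : ∀ y : Fin n, y ∉ ({N, R} : Set (Fin n)) → bP p N R y = p y := by
        intro y hy
        simp only [Set.mem_insert_iff, Set.mem_singleton_iff, not_or] at hy
        simp [bP, hy.1, hy.2]
      refine ⟨a - 1, ?_⟩
      rw [chain_eq_upto hS (fun m hm => ?_) (a-1) le_rfl, hstep]
      simp only [Set.mem_insert_iff, Set.mem_singleton_iff, not_or]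
      constructor
      · intro h
        refine no_cycle hr hre (v := N) (by omega) (Nat.succ_pos m) ?_
        rwa [Function.iterate_succ_apply]
      · intro h
        refine hamin (m+1) (by omega) ?_
        rwa [Function.iterate_succ_apply]
    rw [psi_pos hRK hZK hNK _ ?hc]
    case hc => exact hcond
    apply Subtype.ext
    apply Prod.ext
    · funext y
      by_cases hyN : y = N
      · simp [bP', hyN]
      · by_cases hyR : y = R
        · simp [bP', bP, hyR, Ne.symm hNR]
        · simp [bP', bP, hyN, hyR]
    · funext y
      by_cases hyN : y = N
      · simp [bRk', hyN]
      · by_cases hyR : y = R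
        · simp [bRk', bRk, hyR, Ne.symm hNR]
        · have hby : bP p N R y = p y := by simp [bP, hyN, hyR]
          have hgy : bRk p rk N R y
              = if p y = p N ∧ y ≠ p N ∧ rk N < rk y then rk y - 1 else rk y := by
            simp [bRk, hyN, hyR]
          simp only [bRk', if_neg hyN, if_neg hyR, hby, hgy]
          by_cases hchild : p y = p N ∧ y ≠ p N
          · have hyCh : y ∈ Ch p (p N) := ⟨hchild.1, hchild.2⟩
            have hNCh : N ∈ Ch p (p N) := ⟨rfl, Ne.symm hNnr⟩
            have hne : rk y ≠ rk N :=
              fun h => hyN ((isPlaneOrder_iff.1 hpo).1 (p N) |>.injOn hyCh hNCh h)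
            have e1 : ∀ (c : Prop) [inst : Decidable c] (a b : ℕ),
                (if p y = p N ∧ y ≠ p N ∧ c then a else b) = if c then a else b := by
              intro c _ a b
              by_cases hc : c
              · rw [if_pos ⟨hchild.1, hchild.2, hc⟩, if_pos hc]
              · rw [if_neg (fun h => hc h.2.2), if_neg hc]
            simp only [e1]
            split_ifs <;> omega
          · have hic : ∀ (c : Prop) [inst : Decidable c] (a b : ℕ),
                (if p y = p N ∧ y ≠ p N ∧ c then a else b) = b := by
              intro c _ a b
              exact if_neg (fun h => hchild ⟨h.1, h.2.1⟩)
            simp only [hic]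
  · -- case A
    simp only [phi, dif_neg hB]
    have huavoid : ∀ m, p^[m] (p R) ≠ R := by
      intro m h
      refine no_cycle hr hre (v := R) (by omega) (Nat.succ_pos m) ?_
      rwa [Function.iterate_succ_apply]
    have hS : ∀ y : Fin n, y ∉ ({R} : Set (Fin n)) → aP p R y = p y := by
      intro y hy; simp only [Set.mem_singleton_iff] at hy; simp [aP, hy]
    have hcond : ¬ ∃ m, (aP p R)^[m] (p R) = R := by
      rintro ⟨m, hm⟩
      rw [chain_eq hS (fun m' => by simpa using huavoid m') m] at hm
      exact huavoid m hm
    rw [psi_neg hRK hZK hNK _ ?hc]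
    case hc => exact hcond
    apply Subtype.ext
    apply Prod.ext
    · funext y
      by_cases hyR : y = R
      · simp [aP', hyR]
      · simp [aP', aP, hyR]
    · funext y
      by_cases hyR : y = R
      · simp [aRk', hyR]
      · have hby : aP p R y = p y := by simp [aP, hyR]
        have hgy : aRk p rk R y
            = if p y = p R ∧ y ≠ p R ∧ rk R < rk y then rk y - 1 else rk y := by
          simp [aRk, hyR]
        simp only [aRk', if_neg hyR, hby, hgy]
        by_cases hchild : p y = p R ∧ y ≠ p R
        · have hyCh : y ∈ Ch p (p R) := ⟨hchild.1, hchild.2⟩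
          have hRCh : R ∈ Ch p (p R) := ⟨rfl, Ne.symm hRnr⟩
          have hne : rk y ≠ rk R :=
            fun h => hyR ((isPlaneOrder_iff.1 hpo).1 (p R) |>.injOn hyCh hRCh h)
          have e1 : ∀ (c : Prop) [inst : Decidable c] (a b : ℕ),
              (if p y = p R ∧ y ≠ p R ∧ c then a else b) = if c then a else b := by
            intro c _ a b
            by_cases hc : c
            · rw [if_pos ⟨hchild.1, hchild.2, hc⟩, if_pos hc]
            · rw [if_neg (fun h => hc h.2.2), if_neg hc]
          simp only [e1]
          split_ifs <;> omega
        · have hic : ∀ (c : Prop) [inst : Decidable c] (a b : ℕ),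
              (if p y = p R ∧ y ≠ p R ∧ c then a else b) = b := by
            intro c _ a b
            exact if_neg (fun h => hchild ⟨h.1, h.2.1⟩)
          simp only [hic]

lemma phi_psi (hRK : R.val = K) (hZK : Z.val < K) (hNK : K + 1 ≤ N.val)
    (X : Σ G : Src n (K+1) N Z, ((v : Fin n) × Fin ((Ch G.1.1 v).ncard + 1))) :
    phi hRK hZK hNK (psi hRK hZK hNK X) = X := by
  obtain ⟨⟨⟨p, rk⟩, hG⟩, ⟨v, i⟩⟩ := X
  have hr := hG.1.1
  have hre := hG.1.2
  have hpo := hG.2.1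
  have hNZc := hG.2.2
  have hNR : N ≠ R := src_NR hRK (by omega)
  have hRroot : p R = R := inv_Rroot hRK hr
  have h0 : rk R = 0 := hpo.2 R hRroot
  have hi : (i : ℕ) ≤ (Ch p v).ncard := Nat.lt_succ_iff.mp i.isLt
  by_cases hB : ∃ m, p^[m] v = R
  · obtain ⟨hRroot', hNnr, hNavoid, hvN, hvw, ⟨a, ha⟩, -⟩ :=
      bInv_facts hRK hZK hNK hr hre hNZc hB
    rw [psi_pos hRK hZK hNK _ ?hc]
    case hc => exact hB
    have hhits : ∃ m, (bP' p N R v)^[m] N = R := ⟨a, ha⟩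
    refine Eq.trans (phi_pos hRK hZK hNK _ ?hc2) ?_
    case hc2 => exact hhits
    have hpN : bP' p N R v N = v := by simp [bP']
    have hpR : bP' p N R v R = p N := by simp [bP', Ne.symm hNR]
    refine sigEq _ _ _ _ ?_ ?_ ?_
    · apply Subtype.ext
      apply Prod.ext
      · funext y
        by_cases hyN : y = N
        · simp [bP, hyN, hpR]
        · by_cases hyR : y = R
          · simp [bP, hyR, Ne.symm hNR, hRroot]
          · simp [bP, bP', hyN, hyR]
      · funext y
        by_cases hyN : y = N
        · have hx : bRk' p rk N R v (i : ℕ) R = rk N := by simp [bRk', Ne.symm hNR]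
          simp [bRk, hyN, hx]
        · by_cases hyR : y = R
          · simp [bRk, hyR, Ne.symm hNR, h0]
          · have hby : bP' p N R v y = p y := by simp [bP', hyN, hyR]
            have hgy : bRk' p rk N R v (i : ℕ) y
                = if p y = v ∧ y ≠ v ∧ (i : ℕ) ≤ rk y then rk y + 1 else rk y := by
              simp [bRk', hyN, hyR]
            have hgN : bRk' p rk N R v (i : ℕ) N = (i : ℕ) := by simp [bRk']
            simp only [bRk, if_neg hyN, if_neg hyR, hby, hpN, hgy, hgN]
            by_cases hchild : p y = v ∧ y ≠ v
            · have e1 : ∀ (c : Prop) [inst : Decidable c] (a b : ℕ),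
                  (if p y = v ∧ y ≠ v ∧ c then a else b) = if c then a else b := by
                intro c _ a b
                by_cases hc : c
                · rw [if_pos ⟨hchild.1, hchild.2, hc⟩, if_pos hc]
                · rw [if_neg (fun h => hc h.2.2), if_neg hc]
              simp only [e1]
              split_ifs <;> omega
            · have hic : ∀ (c : Prop) [inst : Decidable c] (a b : ℕ),
                  (if p y = v ∧ y ≠ v ∧ c then a else b) = b := by
                intro c _ a b
                exact if_neg (fun h => hchild ⟨h.1, h.2.1⟩)
              simp only [hic]
    · exact hpN
    · simp [bRk']
  · rw [psi_neg hRK hZK hNK _ ?hc]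
    case hc => exact hB
    have hNavoid : ∀ m, p^[m] N ≠ R := inv_Navoid hRK hZK hr hNZc
    have hvR : v ≠ R := fun h => hB ⟨0, by simpa using h⟩
    have hS : ∀ y : Fin n, y ∉ ({R} : Set (Fin n)) → aP' p R v y = p y := by
      intro y hy; simp only [Set.mem_singleton_iff] at hy; simp [aP', hy]
    have hnot : ¬ ∃ m, (aP' p R v)^[m] N = R := by
      rintro ⟨m, hm⟩
      rw [chain_eq hS (fun m' => by simpa using hNavoid m') m] at hm
      exact hNavoid m hm
    refine Eq.trans (phi_neg hRK hZK hNK _ ?hc3) ?_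
    case hc3 => exact hnot
    have hpR : aP' p R v R = v := by simp [aP']
    refine sigEq _ _ _ _ ?_ ?_ ?_
    · apply Subtype.ext
      apply Prod.ext
      · funext y
        by_cases hyR : y = R
        · simp [aP, hyR, hRroot]
        · simp [aP, aP', hyR]
      · funext y
        by_cases hyR : y = R
        · simp [aRk, hyR, h0]
        · have hby : aP' p R v y = p y := by simp [aP', hyR]
          have hgy : aRk' p rk R v (i : ℕ) y
              = if p y = v ∧ y ≠ v ∧ (i : ℕ) ≤ rk y then rk y + 1 else rk y := by
            simp [aRk', hyR]
          have hgR : aRk' p rk R v (i : ℕ) R = (i : ℕ) := by simp [aRk']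
          simp only [aRk, if_neg hyR, hby, hpR, hgy, hgR]
          by_cases hchild : p y = v ∧ y ≠ v
          · have e1 : ∀ (c : Prop) [inst : Decidable c] (a b : ℕ),
                (if p y = v ∧ y ≠ v ∧ c then a else b) = if c then a else b := by
              intro c _ a b
              by_cases hc : c
              · rw [if_pos ⟨hchild.1, hchild.2, hc⟩, if_pos hc]
              · rw [if_neg (fun h => hc h.2.2), if_neg hc]
            simp only [e1]
            split_ifs <;> omega
          · have hic : ∀ (c : Prop) [inst : Decidable c] (a b : ℕ),
                (if p y = v ∧ y ≠ v ∧ c then a else b) = b := by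
              intro c _ a b
              exact if_neg (fun h => hchild ⟨h.1, h.2.1⟩)
            simp only [hic]
    · exact hpR
    · simp [aRk']

noncomputable def forestEquiv (hRK : R.val = K) (hZK : Z.val < K) (hNK : K + 1 ≤ N.val) :
    Src n K N Z ≃ Σ G : Src n (K+1) N Z, ((v : Fin n) × Fin ((Ch G.1.1 v).ncard + 1)) where
  toFun := phi hRK hZK hNK
  invFun := psi hRK hZK hNK
  left_inv := psi_phi hRK hZK hNK
  right_inv := phi_psi hRK hZK hNK

lemma filter_lt_card {K : ℕ} (hKn : K ≤ n) :
    (Finset.univ.filter (fun y : Fin n => y.val < K)).card = K := by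
  refine Finset.card_eq_of_bijective (fun i hi => ⟨i, lt_of_lt_of_le hi hKn⟩) ?_ ?_ ?_
  · intro a ha
    simp only [Finset.mem_filter, Finset.mem_univ, true_and] at ha
    exact ⟨a.val, ha, Fin.ext rfl⟩
  · intro i hi
    simp only [Finset.mem_filter, Finset.mem_univ, true_and]
    exact hi
  · intro i j hi hj h
    simpa using congrArg Fin.val h

lemma sum_ch_ncard {K : ℕ} {p : Fin n → Fin n}
    (hr : ∀ v : Fin n, p v = v ↔ v.val < K) (hKn : K ≤ n) :
    ∑ v : Fin n, (Ch p v).ncard = n - K := by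
  have h1 : ∀ v : Fin n, (Ch p v).ncard
      = (Finset.univ.filter (fun y : Fin n => p y = v ∧ y ≠ v)).card := by
    intro v
    rw [← Set.ncard_coe_finset]
    congr 1
    ext y
    simp [Ch]
  have h2 : (Finset.univ.filter (fun y : Fin n => ¬ y.val < K)).card
      = ∑ v : Fin n,
          ((Finset.univ.filter (fun y : Fin n => ¬ y.val < K)).filter
            (fun y => p y = v)).card :=
    Finset.card_eq_sum_card_fiberwise (fun x _ => Finset.mem_univ (p x))
  have h3 : ∀ v : Fin n,
      (Finset.univ.filter (fun y : Fin n => ¬ y.val < K)).filter (fun y => p y = v)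
        = Finset.univ.filter (fun y : Fin n => p y = v ∧ y ≠ v) := by
    intro v
    ext y
    simp only [Finset.mem_filter, Finset.mem_univ, true_and]
    constructor
    · rintro ⟨h4, h5⟩
      refine ⟨h5, ?_⟩
      rintro rfl
      exact h4 ((hr y).1 h5)
    · rintro ⟨h4, h5⟩
      refine ⟨?_, h4⟩
      intro hlt
      have hpy : p y = y := (hr y).2 hlt
      rw [h4] at hpy
      exact h5 hpy.symm
  have h4 : (Finset.univ.filter (fun y : Fin n => ¬ y.val < K)).card = n - K := by
    rw [Finset.filter_not, Finset.card_sdiff_of_subset (Finset.filter_subset _ _),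
      filter_lt_card hKn]
    simp
  calc ∑ v : Fin n, (Ch p v).ncard
      = ∑ v : Fin n,
          ((Finset.univ.filter (fun y : Fin n => ¬ y.val < K)).filter
            (fun y => p y = v)).card :=
        Finset.sum_congr rfl (fun v _ => by rw [h1 v, h3 v])
    _ = n - K := by rw [← h2, h4]

lemma card_corner {K : ℕ} {p : Fin n → Fin n}
    (hr : ∀ v : Fin n, p v = v ↔ v.val < K) (hKn : K ≤ n) :
    Fintype.card ((v : Fin n) × Fin ((Ch p v).ncard + 1)) = n + (n - K) := by
  rw [Fintype.card_sigma]
  simp only [Fintype.card_fin]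
  rw [Finset.sum_add_distrib, sum_ch_ncard hr hKn]
  simp only [Finset.sum_const, Finset.card_univ, Fintype.card_fin, smul_eq_mul, mul_one]
  omega

lemma card_src (hRK : R.val = K) (hZK : Z.val < K) (hNK : K + 1 ≤ N.val)
    (hKn : K + 1 ≤ n) :
    Nat.card (Src n K N Z) = (n + (n - (K+1))) * Nat.card (Src n (K+1) N Z) := by
  have e1 := forestEquiv hRK hZK hNK
  have e2 : (Σ G : Src n (K+1) N Z, ((v : Fin n) × Fin ((Ch G.1.1 v).ncard + 1)))
      ≃ Src n (K+1) N Z × Fin (n + (n - (K+1))) :=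
    (Equiv.sigmaCongrRight (fun G =>
      Fintype.equivFinOfCardEq (card_corner G.2.1.1 hKn))).trans
      (Equiv.sigmaEquivProd _ _)
  rw [Nat.card_congr (e1.trans e2), Nat.card_prod,
    show Nat.card (Fin (n + (n - (K+1)))) = n + (n - (K+1)) from by
      simp [Nat.card_eq_fintype_card],
    Nat.mul_comm]

end Main

end PlaneAux

theorem plane_forest_recursion (n k : ℕ) (hn : 2 ≤ n) (hk : 2 ≤ k) (hk' : k ≤ n - 1) :
    Nat.card {pr : (Fin n → Fin n) × (Fin n → ℕ) //
        IsRootedForest n (k - 1) pr.1 ∧ IsPlaneOrder n pr.1 pr.2 ∧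
        ∃ m, pr.1^[m] ⟨n - 1, by omega⟩ = ⟨0, by omega⟩} =
    (2 * n - k) * Nat.card {pr : (Fin n → Fin n) × (Fin n → ℕ) //
        IsRootedForest n k pr.1 ∧ IsPlaneOrder n pr.1 pr.2 ∧
        ∃ m, pr.1^[m] ⟨n - 1, by omega⟩ = ⟨0, by omega⟩} := by
  obtain ⟨K, rfl⟩ : ∃ K, k = K + 1 := ⟨k - 1, by omega⟩
  have hKn : K + 1 ≤ n := by omega
  have h2n : 2 * n - (K + 1) = n + (n - (K+1)) := by omega
  have hcs := PlaneAux.card_src (n := n) (K := K)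
    (N := (⟨n - 1, by omega⟩ : Fin n)) (Z := (⟨0, by omega⟩ : Fin n))
    (R := (⟨K, by omega⟩ : Fin n)) rfl (by simpa using (by omega : 0 < K))
    (by simpa using (by omega : K + 1 ≤ n - 1)) hKn
  simp only [Nat.add_sub_cancel]
  rw [h2n]
  exact hcs
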